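/- For any square matrix T, the Schur multiplier norm satisfies ‖T‖_m ≤ ‖Δ(|T*|)‖^{1/2} · ‖Δ(|T|)‖^{1/2}, where Δ denotes the projection onto the diagonal and |T| = (T*T)^{1/2}. -/

import Mathlib

open scoped ENNReal ComplexOrder Matrix

noncomputable def opNorm2 {m : Type*} [Fintype m] [DecidableEq m] (M : Matrix m m ℂ) : ℝ :=
  ‖Matrix.toEuclideanCLM (𝕜 := ℂ) M‖

noncomputable def schurNorm {m : Type*} [Fintype m] [DecidableEq m] (M : Matrix m m ℂ) : ℝ :=
  ⨆ X : {X : Matrix m m ℂ // opNorm2 X ≤ 1}, opNorm2 (M.hadamard X.1)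

noncomputable def schurNormENN (A : ℕ → ℕ → ℂ) : ℝ≥0∞ :=
  ⨆ n : ℕ, ENNReal.ofReal (schurNorm (Matrix.of fun i j : Fin n => A i j))

noncomputable def schurBound (P : Set (ℕ × ℕ)) : ℝ≥0∞ :=
  ⨆ S : {S : ℕ → ℕ → ℂ //
      (∀ i j, ‖S i j‖ ≤ 1) ∧ ∀ i j, (i, j) ∉ P → S i j = 0},
    schurNormENN S.1

noncomputable def matAbs {m : Type*} [Fintype m] [DecidableEq m] (T : Matrix m m ℂ) :
    Matrix m m ℂ :=
  (Matrix.posSemidef_conjTranspose_mul_self T).1.eigenvectorUnitary.1 *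
    Matrix.diagonal ((↑) ∘ (√·) ∘ (Matrix.posSemidef_conjTranspose_mul_self T).1.eigenvalues) *
    (star (Matrix.posSemidef_conjTranspose_mul_self T).1.eigenvectorUnitary : Matrix m m ℂ)

section Aux
open Matrix Finset
open scoped ComplexConjugate

variable {m : Type*} [Fintype m] [DecidableEq m]

open scoped MatrixOrder in
lemma matAbs_eq (T : Matrix m m ℂ) : matAbs T = CFC.sqrt (Tᴴ * T) := by
  rw [CFC.sqrt_eq_cfc, cfc_nnreal_eq_real _ (Tᴴ * T) (posSemidef_conjTranspose_mul_self T).nonneg,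
    (posSemidef_conjTranspose_mul_self T).1.cfc_eq]
  simp only [matAbs, IsHermitian.cfc, Unitary.conjStarAlgAut_apply]
  congr 3
  funext i
  simp only [Function.comp_apply, Real.coe_sqrt,
    Real.coe_toNNReal _ ((posSemidef_conjTranspose_mul_self T).eigenvalues_nonneg i)]
  rfl

lemma toEuclideanCLM_apply' (A : Matrix m m ℂ) (x : EuclideanSpace ℂ m) (i : m) :
    Matrix.toEuclideanCLM (𝕜 := ℂ) A x i = ∑ j, A i j * x j := by
  have h2 := congrFun (Matrix.ofLp_toEuclideanCLM (n := m) (𝕜 := ℂ) A x) i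
  simpa [Matrix.toLin'_apply, Matrix.mulVec, dotProduct] using h2

lemma le_opNorm2 (A : Matrix m m ℂ) (x : EuclideanSpace ℂ m) :
    ‖Matrix.toEuclideanCLM (𝕜 := ℂ) A x‖ ≤ opNorm2 A * ‖x‖ :=
  (Matrix.toEuclideanCLM (𝕜 := ℂ) A).le_opNorm x

omit [DecidableEq m] in
lemma norm_sq_eq_sum' (x : EuclideanSpace ℂ m) : ‖x‖ ^ 2 = ∑ i, ‖x i‖ ^ 2 := by
  rw [EuclideanSpace.norm_eq, Real.sq_sqrt (by positivity)]

lemma schur_factor_bound (M X : Matrix m m ℂ) (y x : m → EuclideanSpace ℂ m)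
    (hM : ∀ i j, M i j = inner ℂ (y i) (x j))
    (Cy Cx : ℝ) (hCy : 0 ≤ Cy) (hCx : 0 ≤ Cx)
    (hy : ∀ i, ‖y i‖ ≤ Cy) (hx : ∀ j, ‖x j‖ ≤ Cx) :
    opNorm2 (M.hadamard X) ≤ Cy * Cx * opNorm2 X := by
  have hXn : (0:ℝ) ≤ opNorm2 X := norm_nonneg _
  have hC : (0:ℝ) ≤ Cy * Cx * opNorm2 X := by positivity
  set A := Matrix.toEuclideanCLM (𝕜 := ℂ) (M.hadamard X) with hA
  set A' := Matrix.toEuclideanCLM (𝕜 := ℂ) X with hA'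
  have key : ∀ u v : EuclideanSpace ℂ m,
      ‖(inner ℂ u (A v) : ℂ)‖ ≤ Cy * Cx * opNorm2 X * (‖u‖ * ‖v‖) := by
    intro u v
    set Z : m → EuclideanSpace ℂ m :=
      fun a => (WithLp.equiv 2 (m → ℂ)).symm (fun i => u i * y i a) with hZ
    set W : m → EuclideanSpace ℂ m :=
      fun a => (WithLp.equiv 2 (m → ℂ)).symm (fun j => x j a * v j) with hW
    have hZa : ∀ a i, Z a i = u i * y i a := fun a i => rfl
    have hWa : ∀ a j, W a j = x j a * v j := fun a j => rfl
    have step1 : (inner ℂ u (A v) : ℂ) = ∑ a, (inner ℂ (Z a) (A' (W a)) : ℂ) := by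
      have lhs_eq : (inner ℂ u (A v) : ℂ) =
          ∑ i, ∑ j, ∑ b, conj (u i) * conj (y i b) * x j b * X i j * v j := by
        simp only [PiLp.inner_apply, RCLike.inner_apply, hA, toEuclideanCLM_apply',
          Matrix.hadamard_apply, hM, Finset.mul_sum, Finset.sum_mul]
        refine Finset.sum_congr rfl fun i _ => Finset.sum_congr rfl fun j _ => ?_
        exact Finset.sum_congr rfl fun b _ => by ring
      have rhs_eq : ∀ a, (inner ℂ (Z a) (A' (W a)) : ℂ) =
          ∑ i, ∑ j, conj (u i) * conj (y i a) * x j a * X i j * v j := by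
        intro a
        simp only [PiLp.inner_apply, RCLike.inner_apply, hA', toEuclideanCLM_apply',
          hZa, hWa, Finset.mul_sum, Finset.sum_mul, _root_.map_mul]
        refine Finset.sum_congr rfl fun i _ => Finset.sum_congr rfl fun j _ => by ring
      rw [lhs_eq]
      have hcomm : ∀ i : m, ∑ j, ∑ b, conj (u i) * conj (y i b) * x j b * X i j * v j
          = ∑ b, ∑ j, conj (u i) * conj (y i b) * x j b * X i j * v j :=
        fun i => Finset.sum_comm
      rw [Finset.sum_congr rfl fun i _ => hcomm i, Finset.sum_comm]
      exact Finset.sum_congr rfl fun a _ => (rhs_eq a).symm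
    have step2 : ‖(inner ℂ u (A v) : ℂ)‖ ≤ opNorm2 X * ∑ a, ‖Z a‖ * ‖W a‖ := by
      rw [step1]
      refine (norm_sum_le _ _).trans ?_
      rw [Finset.mul_sum]
      refine Finset.sum_le_sum fun a _ => ?_
      calc ‖(inner ℂ (Z a) (A' (W a)) : ℂ)‖ ≤ ‖Z a‖ * ‖A' (W a)‖ := norm_inner_le_norm _ _
        _ ≤ ‖Z a‖ * (opNorm2 X * ‖W a‖) :=
            mul_le_mul_of_nonneg_left (le_opNorm2 _ _) (norm_nonneg _)
        _ = opNorm2 X * (‖Z a‖ * ‖W a‖) := by ring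
    have hZsum : ∑ a, ‖Z a‖ ^ 2 ≤ Cy ^ 2 * ‖u‖ ^ 2 := by
      have h : ∑ a, ‖Z a‖ ^ 2 = ∑ i, ‖u i‖ ^ 2 * ‖y i‖ ^ 2 := by
        simp only [norm_sq_eq_sum', hZa, norm_mul, mul_pow]
        rw [Finset.sum_comm]
        exact Finset.sum_congr rfl fun i _ => by rw [← Finset.mul_sum]
      rw [h, norm_sq_eq_sum', Finset.mul_sum]
      refine Finset.sum_le_sum fun i _ => ?_
      rw [mul_comm (Cy ^ 2) _]
      exact mul_le_mul_of_nonneg_left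
        (pow_le_pow_left₀ (norm_nonneg _) (hy i) 2) (by positivity)
    have hWsum : ∑ a, ‖W a‖ ^ 2 ≤ Cx ^ 2 * ‖v‖ ^ 2 := by
      have h : ∑ a, ‖W a‖ ^ 2 = ∑ j, ‖x j‖ ^ 2 * ‖v j‖ ^ 2 := by
        simp only [norm_sq_eq_sum', hWa, norm_mul, mul_pow]
        rw [Finset.sum_comm]
        exact Finset.sum_congr rfl fun j _ => by rw [← Finset.sum_mul]
      rw [h, norm_sq_eq_sum', Finset.mul_sum]
      refine Finset.sum_le_sum fun j _ => ?_
      rw [mul_comm (Cx ^ 2) _, mul_comm _ (‖v j‖ ^ 2)]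
      exact mul_le_mul_of_nonneg_left
        (pow_le_pow_left₀ (norm_nonneg _) (hx j) 2) (by positivity)
    have cs : ∑ a, ‖Z a‖ * ‖W a‖ ≤ (Cy * ‖u‖) * (Cx * ‖v‖) := by
      have h1 : (∑ a, ‖Z a‖ * ‖W a‖) ^ 2 ≤ (∑ a, ‖Z a‖ ^ 2) * (∑ a, ‖W a‖ ^ 2) :=
        Finset.sum_mul_sq_le_sq_mul_sq Finset.univ _ _
      have h2 : (∑ a, ‖Z a‖ * ‖W a‖) ^ 2 ≤ ((Cy * ‖u‖) * (Cx * ‖v‖)) ^ 2 := by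
        refine h1.trans ?_
        have hmm := mul_le_mul hZsum hWsum (Finset.sum_nonneg fun a _ => by positivity)
          (by positivity)
        calc (∑ a, ‖Z a‖ ^ 2) * (∑ a, ‖W a‖ ^ 2)
            ≤ (Cy ^ 2 * ‖u‖ ^ 2) * (Cx ^ 2 * ‖v‖ ^ 2) := hmm
          _ = ((Cy * ‖u‖) * (Cx * ‖v‖)) ^ 2 := by ring
      have h3 : (0:ℝ) ≤ ∑ a, ‖Z a‖ * ‖W a‖ :=
        Finset.sum_nonneg fun a _ => by positivity
      have h4 := Real.sqrt_le_sqrt h2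
      rwa [Real.sqrt_sq h3, Real.sqrt_sq (by positivity)] at h4
    calc ‖(inner ℂ u (A v) : ℂ)‖ ≤ opNorm2 X * ∑ a, ‖Z a‖ * ‖W a‖ := step2
      _ ≤ opNorm2 X * ((Cy * ‖u‖) * (Cx * ‖v‖)) := mul_le_mul_of_nonneg_left cs hXn
      _ = Cy * Cx * opNorm2 X * (‖u‖ * ‖v‖) := by ring
  show ‖A‖ ≤ _
  refine ContinuousLinearMap.opNorm_le_bound _ hC fun v => ?_
  have h := key (A v) v
  have hin : (inner ℂ (A v) (A v) : ℂ) = (‖A v‖ : ℂ) ^ 2 := inner_self_eq_norm_sq_to_K _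
  rw [hin] at h
  have h2 : ‖A v‖ ^ 2 ≤ Cy * Cx * opNorm2 X * (‖A v‖ * ‖v‖) := by
    calc ‖A v‖ ^ 2 = ‖(‖A v‖ : ℂ) ^ 2‖ := by
          rw [norm_pow, Complex.norm_real, norm_norm]
      _ ≤ _ := h
  rcases (norm_nonneg (A v)).eq_or_lt with h0 | h0
  · rw [← h0]; positivity
  · have h3 : ‖A v‖ * ‖A v‖ ≤ (Cy * Cx * opNorm2 X * ‖v‖) * ‖A v‖ := by nlinarith
    exact le_of_mul_le_mul_right h3 h0

/-- conjugation of a diagonal matrix by a unitary -/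
noncomputable def conjD (V : Matrix.unitaryGroup m ℂ) (f : m → ℂ) : Matrix m m ℂ :=
  (V : Matrix m m ℂ) * Matrix.diagonal f * star (V : Matrix m m ℂ)

lemma conjD_mul (V : Matrix.unitaryGroup m ℂ) (f g : m → ℂ) :
    conjD V f * conjD V g = conjD V (f * g) := by
  have h : star (V : Matrix m m ℂ) * (V : Matrix m m ℂ) = 1 :=
    Matrix.UnitaryGroup.star_mul_self V
  show (V : Matrix m m ℂ) * diagonal f * star (V : Matrix m m ℂ) *
    ((V : Matrix m m ℂ) * diagonal g * star (V : Matrix m m ℂ)) = _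
  calc (V : Matrix m m ℂ) * diagonal f * star (V : Matrix m m ℂ) *
        ((V : Matrix m m ℂ) * diagonal g * star (V : Matrix m m ℂ))
      = (V : Matrix m m ℂ) * (diagonal f *
          ((star (V : Matrix m m ℂ) * (V : Matrix m m ℂ)) * diagonal g)) *
          star (V : Matrix m m ℂ) := by noncomm_ring
    _ = (V : Matrix m m ℂ) * (diagonal f * diagonal g) * star (V : Matrix m m ℂ) := by
        rw [h, one_mul]
    _ = conjD V (f * g) := by rw [diagonal_mul_diagonal]; rfl

lemma conjD_one (V : Matrix.unitaryGroup m ℂ) : conjD V 1 = 1 := by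
  show (V : Matrix m m ℂ) * diagonal (fun _ => (1:ℂ)) * star (V : Matrix m m ℂ) = 1
  rw [diagonal_one, mul_one]
  exact V.2.2

lemma conjD_conjTranspose (V : Matrix.unitaryGroup m ℂ) (f : m → ℂ) :
    (conjD V f)ᴴ = conjD V (star f) := by
  show ((V : Matrix m m ℂ) * diagonal f * star (V : Matrix m m ℂ))ᴴ = _
  rw [← Matrix.star_eq_conjTranspose, StarMul.star_mul, StarMul.star_mul, star_star,
    Matrix.star_eq_conjTranspose (diagonal f), diagonal_conjTranspose, ← mul_assoc]
  rfl

lemma conjD_sub (V : Matrix.unitaryGroup m ℂ) (f g : m → ℂ) :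
    conjD V f - conjD V g = conjD V (f - g) := by
  show _ = (V : Matrix m m ℂ) * diagonal (fun i => f i - g i) * star (V : Matrix m m ℂ)
  rw [← Matrix.diagonal_sub, Matrix.mul_sub, Matrix.sub_mul]
  rfl

lemma conjD_zero (V : Matrix.unitaryGroup m ℂ) : conjD V 0 = 0 := by
  show (V : Matrix m m ℂ) * diagonal (fun _ => (0:ℂ)) * star (V : Matrix m m ℂ) = 0
  rw [Matrix.diagonal_zero, Matrix.mul_zero, Matrix.zero_mul]

lemma re_mul_star (z : ℂ) : (z * star z).re = ‖z‖ ^ 2 := by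
  rw [Complex.star_def, Complex.mul_conj, Complex.ofReal_re,
    Complex.sq_norm]

lemma re_star_mul (z : ℂ) : (star z * z).re = ‖z‖ ^ 2 := by
  rw [mul_comm]; exact re_mul_star z

open scoped MatrixOrder in
lemma exists_KQ (T : Matrix m m ℂ) :
    ∃ K Q : Matrix m m ℂ, K * Q = T ∧ K * Kᴴ = matAbs Tᴴ ∧ Qᴴ * Q = matAbs T := by
  have hQ4 : matAbs T * matAbs T = Tᴴ * T :=
    by rw [matAbs_eq]; exact CFC.sqrt_mul_sqrt_self _ (Matrix.posSemidef_conjTranspose_mul_self T).nonneg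
  obtain ⟨Q, hQ, hQ2⟩ : ∃ Q : Matrix m m ℂ, Q.PosSemidef ∧ Q * Q = matAbs T := by
    have hQ1 : Matrix.PosSemidef (matAbs T) :=
      by rw [matAbs_eq]; exact (CFC.sqrt_nonneg _).posSemidef
    exact ⟨CFC.sqrt (matAbs T), (CFC.sqrt_nonneg _).posSemidef, CFC.sqrt_mul_sqrt_self _ hQ1.nonneg⟩
  obtain ⟨V, d, spec⟩ : ∃ (V : Matrix.unitaryGroup m ℂ) (d : m → ℝ),
      Q = conjD V (fun i => (d i : ℂ)) :=
    ⟨hQ.1.eigenvectorUnitary, hQ.1.eigenvalues, hQ.1.spectral_theorem⟩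
  set dC : m → ℂ := fun i => (d i : ℂ) with hdC
  set pC : m → ℂ := fun i => if d i = 0 then 0 else 1 with hpC
  set iC : m → ℂ := fun i => (dC i)⁻¹ with hiC
  have hTT : Tᴴ * T = conjD V (dC * dC * (dC * dC)) := by
    rw [← hQ4, ← hQ2, spec, conjD_mul, conjD_mul]
  have htp : T * conjD V pC = T := by
    set qC : m → ℂ := fun i => 1 - pC i with hqC
    have hqeq : qC = 1 - pC := by funext i; simp [hqC]
    set N := T * conjD V qC with hN
    have hNzero : N = 0 := by
      rw [← Matrix.conjTranspose_mul_self_eq_zero]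
      have hqstar : star qC = qC := by
        funext i
        simp only [hqC, hpC, Pi.star_apply]
        by_cases h : d i = 0 <;> simp [h]
      have h2 : Nᴴ * N = conjD V (qC * (dC * dC * (dC * dC)) * qC) := by
        rw [hN, Matrix.conjTranspose_mul, conjD_conjTranspose, hqstar, mul_assoc,
          ← mul_assoc Tᴴ T, hTT, conjD_mul, conjD_mul]
        congr 1
        ring
      rw [h2]
      have h3 : qC * (dC * dC * (dC * dC)) * qC = 0 := by
        funext i
        simp only [Pi.mul_apply, Pi.zero_apply, hqC, hpC, hdC]
        by_cases h : d i = 0 <;> simp [h]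
      rw [h3, conjD_zero]
    have hq : conjD V qC = 1 - conjD V pC := by
      rw [hqeq, ← conjD_sub, conjD_one]
    have h1 : T - T * conjD V pC = N := by
      rw [hN, hq, Matrix.mul_sub, Matrix.mul_one]
    exact (sub_eq_zero.mp (h1.trans hNzero)).symm
  refine ⟨T * conjD V iC, Q, ?_, ?_, ?_⟩
  · rw [mul_assoc, spec, conjD_mul]
    have hip : iC * dC = pC := by
      funext i
      simp only [Pi.mul_apply, hiC, hdC, hpC]
      by_cases h : d i = 0
      · simp [h]
      · rw [inv_mul_cancel₀ (by exact_mod_cast h)]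
        simp [h]
    rw [hip, htp]
  · have histar : star iC = iC := by
      funext i
      simp only [Pi.star_apply, hiC, hdC, ← Complex.ofReal_inv]
      exact Complex.conj_ofReal _
    have hKH : (T * conjD V iC)ᴴ = conjD V iC * Tᴴ := by
      rw [Matrix.conjTranspose_mul, conjD_conjTranspose, histar]
    have hBpsd : Matrix.PosSemidef (T * conjD V iC * (T * conjD V iC)ᴴ) :=
      Matrix.posSemidef_self_mul_conjTranspose _
    rw [matAbs_eq]; refine (CFC.sqrt_unique ?_ hBpsd.nonneg).symm
    rw [Matrix.conjTranspose_conjTranspose]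
    rw [hKH]
    calc T * conjD V iC * (conjD V iC * Tᴴ) * (T * conjD V iC * (conjD V iC * Tᴴ))
        = T * (conjD V iC * conjD V iC) * (Tᴴ * T) * (conjD V iC * conjD V iC) * Tᴴ := by
          noncomm_ring
      _ = T * conjD V (iC * iC * (dC * dC * (dC * dC)) * (iC * iC)) * Tᴴ := by
          rw [hTT, conjD_mul, mul_assoc T, conjD_mul, mul_assoc T, conjD_mul]
      _ = T * conjD V pC * Tᴴ := by
          have h5 : iC * iC * (dC * dC * (dC * dC)) * (iC * iC) = pC := by
            funext i
            simp only [Pi.mul_apply, hiC, hdC, hpC]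
            by_cases h : d i = 0
            · simp [h]
            · have hne : (d i : ℂ) ≠ 0 := by exact_mod_cast h
              rw [if_neg h]
              field_simp
          rw [h5]
      _ = T * Tᴴ := by rw [htp]
  · rw [hQ.1.eq, hQ2]

end Aux

theorem stmt_12 {n : ℕ} (T : Matrix (Fin n) (Fin n) ℂ) :
    schurNorm T ≤
      Real.sqrt (⨆ i, (matAbs Tᴴ i i).re) * Real.sqrt (⨆ i, (matAbs T i i).re) := by
  classical
  obtain ⟨K, Q, hKQ, hKK, hQQ⟩ := exists_KQ T
  set Cy := Real.sqrt (⨆ i, (matAbs Tᴴ i i).re) with hCydef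
  set Cx := Real.sqrt (⨆ i, (matAbs T i i).re) with hCxdef
  have hCy : 0 ≤ Cy := Real.sqrt_nonneg _
  have hCx : 0 ≤ Cx := Real.sqrt_nonneg _
  set y : Fin n → EuclideanSpace ℂ (Fin n) :=
    fun i => (WithLp.equiv 2 (Fin n → ℂ)).symm (fun a => star (K i a)) with hydef
  set x : Fin n → EuclideanSpace ℂ (Fin n) :=
    fun j => (WithLp.equiv 2 (Fin n → ℂ)).symm (fun a => Q a j) with hxdef
  have hya : ∀ i a, y i a = star (K i a) := fun i a => rfl
  have hxa : ∀ j a, x j a = Q a j := fun j a => rfl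
  have hM : ∀ i j, T i j = (inner ℂ (y i) (x j) : ℂ) := by
    intro i j
    rw [← hKQ, Matrix.mul_apply]
    simp only [PiLp.inner_apply, RCLike.inner_apply, hya, hxa]
    exact Finset.sum_congr rfl fun a _ => by simp [mul_comm]
  have hy : ∀ i, ‖y i‖ ≤ Cy := by
    intro i
    refine Real.le_sqrt_of_sq_le ?_
    have h1 : ‖y i‖ ^ 2 = (matAbs Tᴴ i i).re := by
      rw [norm_sq_eq_sum', ← hKK, Matrix.mul_apply, Complex.re_sum]
      refine Finset.sum_congr rfl fun a _ => ?_
      simp only [hya, norm_star, Matrix.conjTranspose_apply, re_mul_star]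
    rw [h1]
    exact le_ciSup (f := fun i => (matAbs Tᴴ i i).re)
      (Set.Finite.bddAbove (Set.finite_range _)) i
  have hx : ∀ j, ‖x j‖ ≤ Cx := by
    intro j
    refine Real.le_sqrt_of_sq_le ?_
    have h1 : ‖x j‖ ^ 2 = (matAbs T j j).re := by
      rw [norm_sq_eq_sum', ← hQQ, Matrix.mul_apply, Complex.re_sum]
      refine Finset.sum_congr rfl fun a _ => ?_
      simp only [hxa, Matrix.conjTranspose_apply, re_star_mul]
    rw [h1]
    exact le_ciSup (f := fun i => (matAbs T i i).re)
      (Set.Finite.bddAbove (Set.finite_range _)) j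
  refine Real.iSup_le (fun X => ?_) (mul_nonneg hCy hCx)
  calc opNorm2 (T.hadamard X.1)
      ≤ Cy * Cx * opNorm2 X.1 := schur_factor_bound T X.1 y x hM Cy Cx hCy hCx hy hx
    _ ≤ Cy * Cx * 1 := mul_le_mul_of_nonneg_left X.2 (mul_nonneg hCy hCx)
    _ = Cy * Cx := mul_one _
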